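/- Let ε ~ N(0,1) be independent of the J-dimensional standard normal vector D = (D₁, …, D_J)ᵀ ~ N(0_J, I_J), let a ≥ 0, and let v ≥ 0 and c ≥ 0 be real numbers. Then for every t ≥ 0, P( |v^{1/2} ε + c D₁| ≤ t | DᵀD ≥ a ) ≤ P( v^{1/2} |ε| ≤ t ); that is, a N(0, v) random variable is more peaked than the convolution v^{1/2} ε + c ℒ′, with ℒ′ ~ D₁ | {DᵀD ≥ a} independent of ε. -/

import Mathlib

open MeasureTheory ProbabilityTheory Set
open scoped ProbabilityTheory Real

/-- The standard Gaussian measure on `ℝ^J`: the product of `J` standard normals. -/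
noncomputable def stdGaussian (J : ℕ) : Measure (Fin J → ℝ) :=
  Measure.pi (fun _ => gaussianReal 0 1)

instance (J : ℕ) : IsProbabilityMeasure (_root_.stdGaussian J) := by
  unfold _root_.stdGaussian; infer_instance

/-- The joint law of `(ε, D)` with `ε ~ N(0,1)` independent of the standard normal vector
`D ~ N(0_J, I_J)`. -/
noncomputable def epsD (J : ℕ) : Measure (ℝ × (Fin J → ℝ)) :=
  (gaussianReal 0 1).prod (_root_.stdGaussian J)

private lemma gPDF_even (x : ℝ) : gaussianPDFReal 0 1 (-x) = gaussianPDFReal 0 1 x := by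
  simp [gaussianPDFReal, neg_sq]

private lemma gPDF_intervalIntegrable (a b : ℝ) :
    IntervalIntegrable (gaussianPDFReal 0 1) MeasureTheory.volume a b :=
  (integrable_gaussianPDFReal 0 1).intervalIntegrable

/-- The shifted piece inequality: `∫_{L}^{c+L} φ ≤ ∫_{-L}^{c-L} φ`. -/
private lemma shift_piece (L c : ℝ) (hL : 0 ≤ L) (hc : 0 ≤ c) :
    ∫ x in L..(c + L), gaussianPDFReal 0 1 x
      ≤ ∫ x in (-L)..(c - L), gaussianPDFReal 0 1 x := by
  have h2 : ∫ x in L..(c + L), gaussianPDFReal 0 1 (x - 2 * L)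
      = ∫ x in (-L)..(c - L), gaussianPDFReal 0 1 x := by
    rw [intervalIntegral.integral_comp_sub_right]
    have e1 : L - 2 * L = -L := by ring
    have e2 : c + L - 2 * L = c - L := by ring
    rw [e1, e2]
  rw [← h2]
  apply intervalIntegral.integral_mono_on (by linarith)
      (gPDF_intervalIntegrable _ _)
  · exact ((integrable_gaussianPDFReal 0 1).comp_sub_right (2 * L)).intervalIntegrable
  · intro x hx
    obtain ⟨hx1, _⟩ := hx
    rw [gaussianPDFReal_def]
    simp only
    apply mul_le_mul_of_nonneg_left _ (by positivity)
    apply Real.exp_le_exp.mpr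
    push_cast
    nlinarith

private lemma gauss_interval_le_nonneg (L : ℝ) (hL : 0 ≤ L) (c : ℝ) (hc : 0 ≤ c) :
    ∫ x in (c - L)..(c + L), gaussianPDFReal 0 1 x
      ≤ ∫ x in (-L)..L, gaussianPDFReal 0 1 x := by
  have split1 : ∫ x in (c - L)..(c + L), gaussianPDFReal 0 1 x
      = (∫ x in (c - L)..(-L), gaussianPDFReal 0 1 x)
        + (∫ x in (-L)..L, gaussianPDFReal 0 1 x)
        + ∫ x in L..(c + L), gaussianPDFReal 0 1 x := by
    rw [intervalIntegral.integral_add_adjacent_intervals (gPDF_intervalIntegrable _ _)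
        (gPDF_intervalIntegrable _ _),
      intervalIntegral.integral_add_adjacent_intervals (gPDF_intervalIntegrable _ _)
        (gPDF_intervalIntegrable _ _)]
  have hneg : ∫ x in (c - L)..(-L), gaussianPDFReal 0 1 x
      = - ∫ x in (-L)..(c - L), gaussianPDFReal 0 1 x :=
    (intervalIntegral.integral_symm _ _)
  have := shift_piece L c hL hc
  rw [split1, hneg]
  linarith

/-- interval integral of the standard normal pdf over an interval of half-length `L`
centered at `c` is at most the one centered at `0`. -/
private lemma gauss_interval_le (L : ℝ) (hL : 0 ≤ L) (c : ℝ) :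
    ∫ x in (c - L)..(c + L), gaussianPDFReal 0 1 x
      ≤ ∫ x in (-L)..L, gaussianPDFReal 0 1 x := by
  rcases le_or_gt 0 c with hc | hc
  · exact gauss_interval_le_nonneg L hL c hc
  · have hsym : ∫ x in (c - L)..(c + L), gaussianPDFReal 0 1 x
        = ∫ x in (-c - L)..(-c + L), gaussianPDFReal 0 1 x := by
      have h : ∫ x in (-c - L)..(-c + L), gaussianPDFReal 0 1 x
          = ∫ x in (-c - L)..(-c + L), gaussianPDFReal 0 1 (-x) := by
        simp [gPDF_even]
      rw [h, intervalIntegral.integral_comp_neg]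
      have e1 : -(-c + L) = c - L := by ring
      have e2 : -(-c - L) = c + L := by ring
      rw [e1, e2]
    rw [hsym]
    exact gauss_interval_le_nonneg L hL (-c) (by linarith)

/-- Key one-dimensional inequality: measure-level Anderson-type bound. -/
private lemma gauss_Icc_le (L : ℝ) (hL : 0 ≤ L) (c : ℝ) :
    gaussianReal 0 1 (Icc (c - L) (c + L)) ≤ gaussianReal 0 1 (Icc (-L) L) := by
  rw [gaussianReal_apply_eq_integral 0 one_ne_zero, gaussianReal_apply_eq_integral 0 one_ne_zero]
  apply ENNReal.ofReal_le_ofReal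
  have e1 : ∫ x in Icc (c - L) (c + L), gaussianPDFReal 0 1 x
      = ∫ x in (c - L)..(c + L), gaussianPDFReal 0 1 x := by
    rw [intervalIntegral.integral_of_le (by linarith), integral_Icc_eq_integral_Ioc]
  have e2 : ∫ x in Icc (-L) L, gaussianPDFReal 0 1 x
      = ∫ x in (-L)..L, gaussianPDFReal 0 1 x := by
    rw [intervalIntegral.integral_of_le (by linarith), integral_Icc_eq_integral_Ioc]
  rw [e1, e2]
  exact gauss_interval_le L hL c

/-- Pointwise (in the shift `m`) peakedness bound. -/
private lemma gauss_shift_le (v t : ℝ) (hv : 0 ≤ v) (ht : 0 ≤ t) (m : ℝ) :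
    gaussianReal 0 1 {x : ℝ | |Real.sqrt v * x + m| ≤ t}
      ≤ gaussianReal 0 1 {y : ℝ | Real.sqrt v * |y| ≤ t} := by
  rcases eq_or_lt_of_le (Real.sqrt_nonneg v) with hs | hs
  · -- √v = 0 : RHS set is univ
    have : {y : ℝ | Real.sqrt v * |y| ≤ t} = Set.univ := by
      ext y; simp [← hs, ht]
    rw [this]
    simpa using prob_le_one
  · set s := Real.sqrt v with hsdef
    have hE : {x : ℝ | |s * x + m| ≤ t} = Icc ((-m) / s - t / s) ((-m) / s + t / s) := by
      ext x
      simp only [mem_setOf_eq, mem_Icc, abs_le]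
      constructor
      · rintro ⟨h1, h2⟩
        constructor
        · rw [div_sub_div_same, div_le_iff₀ hs]; linarith
        · rw [← add_div, le_div_iff₀ hs]; linarith
      · rintro ⟨h1, h2⟩
        rw [div_sub_div_same, div_le_iff₀ hs] at h1
        rw [← add_div, le_div_iff₀ hs] at h2
        constructor <;> linarith
    have hF : {y : ℝ | s * |y| ≤ t} = Icc (-(t / s)) (t / s) := by
      ext y
      simp only [mem_setOf_eq, mem_Icc]
      rw [mul_comm, ← le_div_iff₀ hs, abs_le]
    rw [hE, hF]
    exact gauss_Icc_le (t / s) (by positivity) (-m / s)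

/-- For `v ≥ 0`, `c ≥ 0`, and `a ≥ 0`, a `N(0, v)` random variable is more peaked than the
convolution `v^{1/2} ε + c ℒ′`, with `ℒ′ ~ D₁ | {DᵀD ≥ a}` independent of `ε ~ N(0,1)`:
for `t ≥ 0`, `P(|v^{1/2} ε + c D₁| ≤ t | DᵀD ≥ a) ≤ P(v^{1/2}|ε| ≤ t)`. -/
theorem normal_morePeaked_than_convolution_truncated_ge
    (J : ℕ) (hJ : 0 < J) (a : ℝ) (ha : 0 ≤ a)
    (v c : ℝ) (hv : 0 ≤ v) (hc : 0 ≤ c) (t : ℝ) (ht : 0 ≤ t) :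
    (epsD J)[|{p | a ≤ ∑ i, (p.2 i) ^ 2}]
        {p | |Real.sqrt v * p.1 + c * p.2 ⟨0, hJ⟩| ≤ t}
      ≤ gaussianReal 0 1 {y : ℝ | Real.sqrt v * |y| ≤ t} := by
  set γ := gaussianReal 0 1 with hγ
  set ν := stdGaussian J with hν
  set S : Set (Fin J → ℝ) := {y | a ≤ ∑ i, (y i) ^ 2} with hS
  set R := γ {y : ℝ | Real.sqrt v * |y| ≤ t} with hR
  have hSm : MeasurableSet S := by
    apply measurableSet_le measurable_const
    exact Finset.measurable_sum _ (fun i _ => ((measurable_pi_apply i).pow_const 2))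
  have hsm : MeasurableSet {p : ℝ × (Fin J → ℝ) | a ≤ ∑ i, (p.2 i) ^ 2} :=
    measurable_snd hSm
  have hEm : MeasurableSet {p : ℝ × (Fin J → ℝ) |
      |Real.sqrt v * p.1 + c * p.2 ⟨0, hJ⟩| ≤ t} := by
    have hf : Measurable fun p : ℝ × (Fin J → ℝ) =>
        |Real.sqrt v * p.1 + c * p.2 ⟨0, hJ⟩| := by
      apply Measurable.abs
      exact (measurable_fst.const_mul _).add
        ((measurable_pi_apply (⟨0, hJ⟩ : Fin J) |>.comp measurable_snd).const_mul _)
    exact measurableSet_le hf measurable_const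
  rw [ProbabilityTheory.cond_apply hsm]
  -- compute μprod of the big set
  have hprod : epsD J {p : ℝ × (Fin J → ℝ) | a ≤ ∑ i, (p.2 i) ^ 2} = ν S := by
    have : {p : ℝ × (Fin J → ℝ) | a ≤ ∑ i, (p.2 i) ^ 2} = Set.univ ×ˢ S := by
      ext p; simp [hS]
    rw [epsD, this, Measure.prod_prod]
    simp [hν]
  -- bound the intersection measure
  have hinter : epsD J ({p : ℝ × (Fin J → ℝ) | a ≤ ∑ i, (p.2 i) ^ 2} ∩
      {p | |Real.sqrt v * p.1 + c * p.2 ⟨0, hJ⟩| ≤ t}) ≤ ν S * R := by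
    rw [epsD, Measure.prod_apply_symm (hsm.inter hEm)]
    have hslice : ∀ y : Fin J → ℝ,
        γ ((fun x => (x, y)) ⁻¹' ({p : ℝ × (Fin J → ℝ) | a ≤ ∑ i, (p.2 i) ^ 2} ∩
          {p | |Real.sqrt v * p.1 + c * p.2 ⟨0, hJ⟩| ≤ t}))
          ≤ S.indicator (fun _ => R) y := by
      intro y
      by_cases hy : y ∈ S
      · rw [Set.indicator_of_mem hy]
        refine le_trans (measure_mono ?_) (gauss_shift_le v t hv ht (c * y ⟨0, hJ⟩))
        intro x hx
        exact hx.2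
      · rw [Set.indicator_of_notMem hy]
        have : ((fun x => (x, y)) ⁻¹' ({p : ℝ × (Fin J → ℝ) | a ≤ ∑ i, (p.2 i) ^ 2} ∩
            {p | |Real.sqrt v * p.1 + c * p.2 ⟨0, hJ⟩| ≤ t})) = ∅ := by
          ext x
          simp only [Set.mem_preimage, Set.mem_inter_iff, Set.mem_setOf_eq,
            Set.mem_empty_iff_false, iff_false, not_and]
          intro h
          exact absurd h hy
        simp [this]
    calc ∫⁻ y, γ ((fun x => (x, y)) ⁻¹' _) ∂ν
        ≤ ∫⁻ y, S.indicator (fun _ => R) y ∂ν := lintegral_mono hslice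
      _ = ν S * R := by
          rw [lintegral_indicator_const hSm]
          exact mul_comm _ _
  rw [hprod]
  calc (ν S)⁻¹ * epsD J _ ≤ (ν S)⁻¹ * (ν S * R) := mul_le_mul_right hinter _
    _ = ((ν S)⁻¹ * ν S) * R := by ring
    _ ≤ 1 * R := mul_le_mul_left (ENNReal.inv_mul_le_one _) _
    _ = R := one_mul R
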